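/- In the Pascal automaton P_{p,R} with state set (ℤ/pℤ) × (ℤ/ψℤ), initial state (0,0), and transitions δ((s,t), a) = (s + a·b^t, t+1) for digits a < b, the run of a word u (LSDF) starting from state (s,t) ends in the state (s + (val(u) mod p)·b^t, t + (|u| mod ψ)). In particular, the run of u from (0,0) ends in (val(u) mod p, |u| mod ψ). -/
import Mathlib


/-- LSDF value of a word of digits in base `b`. -/
def wval (b : ℕ) : List ℕ → ℕ
  | [] => 0
  | a :: u => a + b * wval b u

/-- One transition of the Pascal automaton: `δ((s,t),a) = (s + a·b^t, t+1)`. -/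
def pstep (b p ψ : ℕ) (x : ZMod p × ZMod ψ) (a : ℕ) : ZMod p × ZMod ψ :=
  (x.1 + (a : ZMod p) * (b : ZMod p) ^ x.2.val, x.2 + 1)

/-- The run of a word in the Pascal automaton, `δ((s,t), v·a) = δ(δ((s,t),v), a)`. -/
def prun (b p ψ : ℕ) (x : ZMod p × ZMod ψ) (u : List ℕ) : ZMod p × ZMod ψ :=
  u.foldl (pstep b p ψ) x

theorem stmt_16 (b p ψ : ℕ) (hb : 2 ≤ b) (hp : 1 ≤ p) (hco : Nat.Coprime b p)
    (hψ : 0 < ψ) (hψ1 : b ^ ψ ≡ 1 [MOD p])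
    (hψmin : ∀ j, 0 < j → b ^ j ≡ 1 [MOD p] → ψ ≤ j)
    (u : List ℕ) (hu : ∀ d ∈ u, d < b) :
    (∀ (s : ZMod p) (t : ZMod ψ),
        prun b p ψ (s, t) u =
          (s + ((wval b u : ZMod p)) * (b : ZMod p) ^ t.val,
            t + (u.length : ZMod ψ))) ∧
    prun b p ψ (0, 0) u = ((wval b u : ZMod p), (u.length : ZMod ψ)) := by
  haveI : NeZero ψ := ⟨hψ.ne'⟩
  have hone : (b : ZMod p) ^ ψ = 1 := by
    have := (ZMod.natCast_eq_natCast_iff _ _ _).mpr hψ1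
    push_cast at this; simpa using this
  have hmod : ∀ n : ℕ, (b : ZMod p) ^ (n % ψ) = (b : ZMod p) ^ n := by
    intro n
    conv_rhs => rw [← Nat.div_add_mod n ψ]
    rw [pow_add, pow_mul, hone, one_pow, one_mul]
  have main : ∀ u : List ℕ, ∀ (s : ZMod p) (t : ZMod ψ),
      prun b p ψ (s, t) u =
        (s + ((wval b u : ZMod p)) * (b : ZMod p) ^ t.val,
          t + (u.length : ZMod ψ)) := by
    intro u
    induction u with
    | nil => intro s t; simp [prun, wval]
    | cons a u ih =>
      intro s t
      have h1 : prun b p ψ (s, t) (a :: u) = prun b p ψ (pstep b p ψ (s, t) a) u := rfl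
      rw [h1, pstep, ih]
      have hpow : (b : ZMod p) ^ (t + 1).val = (b : ZMod p) ^ t.val * (b : ZMod p) := by
        rw [show (t + 1 : ZMod ψ) = ((t.val + 1 : ℕ) : ZMod ψ) by
              push_cast [ZMod.natCast_val, ZMod.cast_id]; ring,
            ZMod.val_natCast, hmod, pow_succ]
      simp only [wval, List.length_cons, Prod.mk.injEq]
      constructor
      · push_cast
        rw [hpow]; ring
      · push_cast
        ring
  refine ⟨main u, ?_⟩
  rw [main u 0 0]
  simp [ZMod.val_zero]
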